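/- For q odd, there is a Besicovitch set in F_q² of size q(q+1)/2 + (q-1)/2. -/

import Mathlib

open Finset

lemma two_mul_card_squares {F : Type*} [Field F] [Fintype F] [DecidableEq F]
    (hq : Odd (Fintype.card F)) :
    2 * (univ.filter (IsSquare : F → Prop)).card = Fintype.card F + 1 := by
  have hchar : ringChar F ≠ 2 := by
    intro h
    have := FiniteField.even_card_of_char_two h
    obtain ⟨k, hk⟩ := hq
    omega
  have h2 : (2 : F) ≠ 0 := Ring.two_ne_zero hchar
  set S := univ.filter (IsSquare : F → Prop) with hS
  have hcard : Fintype.card F = ∑ a ∈ S, (univ.filter fun x : F => x * x = a).card := by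
    rw [← Finset.card_univ]
    exact Finset.card_eq_sum_card_fiberwise fun x _ => by
      simp only [hS, mem_filter, mem_univ, true_and]
      exact Finset.mem_filter.mpr ⟨mem_univ _, ⟨x, rfl⟩⟩
  have hfiber : ∀ a ∈ S, (univ.filter fun x : F => x * x = a).card
      + (if a = 0 then 1 else 0) = 2 := by
    intro a haS
    obtain ⟨r, hr⟩ : IsSquare a := by simpa [hS] using haS
    by_cases ha : a = 0
    · subst ha
      have h1 : (univ.filter fun x : F => x * x = 0) = {0} := by
        ext x; simp [mul_self_eq_zero]
      rw [h1, if_pos rfl, Finset.card_singleton]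
    · have hrne : r ≠ 0 := by rintro rfl; simp at hr; exact ha hr
      have hne : r ≠ -r := by
        intro h
        apply hrne
        have h' : 2 * r = 0 := by linear_combination h
        rcases mul_eq_zero.mp h' with h'' | h''
        · exact absurd h'' h2
        · exact h''
      have h1 : (univ.filter fun x : F => x * x = a) = {r, -r} := by
        ext x
        simp only [mem_filter, mem_univ, true_and, mem_insert, mem_singleton, hr]
        constructor
        · intro h
          have hd : (x - r) * (x + r) = 0 := by linear_combination h
          rcases mul_eq_zero.mp hd with h' | h'
          · exact Or.inl (sub_eq_zero.mp h')
          · exact Or.inr (eq_neg_of_add_eq_zero_left h')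
        · rintro (rfl | rfl) <;> ring
      rw [h1, if_neg ha, Finset.card_pair hne]
  have hsum : ∑ a ∈ S, ((univ.filter fun x : F => x * x = a).card
      + (if a = 0 then 1 else 0)) = 2 * S.card := by
    rw [Finset.sum_congr rfl hfiber, Finset.sum_const, smul_eq_mul, mul_comm]
  have h0S : (0 : F) ∈ S := by simp [hS]
  rw [Finset.sum_add_distrib, Finset.sum_ite_eq' S (0:F) (fun _ => 1), if_pos h0S,
    ← hcard] at hsum
  omega

/-- For `q` odd there is a Besicovitch set in `F_q²` of size
`q(q+1)/2 + (q-1)/2`. -/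
theorem besicovitch_upper_bound {F : Type*} [Field F] [Fintype F] [DecidableEq F]
    (hq : Odd (Fintype.card F)) :
    ∃ P : Finset (F × F),
      (∀ m : F, ∃ b : F, ∀ x : F, (x, m * x + b) ∈ P) ∧
      (∃ a : F, ∀ y : F, (a, y) ∈ P) ∧
      (P.card : ℚ) = Fintype.card F * (Fintype.card F + 1) / 2 +
        (Fintype.card F - 1) / 2 := by
  have hchar : ringChar F ≠ 2 := by
    intro h
    have := FiniteField.even_card_of_char_two h
    obtain ⟨k, hk⟩ := hq
    omega
  have h2 : (2 : F) ≠ 0 := Ring.two_ne_zero hchar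
  set S := univ.filter (IsSquare : F → Prop) with hSdef
  set A := univ.filter (fun p : F × F => IsSquare (p.1 * p.1 - p.2)) with hAdef
  set B := univ.filter (fun p : F × F => p.1 = 0) with hBdef
  refine ⟨A ∪ B, ?_, ?_, ?_⟩
  · -- lines in every (non-vertical) direction
    intro m
    refine ⟨-(m / 2 * (m / 2)), fun x => ?_⟩
    apply Finset.mem_union_left
    simp only [hAdef, mem_filter, mem_univ, true_and]
    exact ⟨x - m / 2, by field_simp; ring⟩
  · -- the vertical line
    exact ⟨0, fun y => Finset.mem_union_right _ (by simp [hBdef])⟩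
  · -- cardinality
    have hA : A = (univ ×ˢ S).image (fun p : F × F => (p.1, p.1 * p.1 - p.2)) := by
      ext ⟨x, y⟩
      simp only [hAdef, mem_filter, mem_univ, true_and]
      rw [Finset.mem_image]
      constructor
      · rintro ⟨r, hr⟩
        refine ⟨(x, r * r), Finset.mem_product.mpr ⟨mem_univ _, ?_⟩, ?_⟩
        · exact Finset.mem_filter.mpr ⟨mem_univ _, ⟨r, rfl⟩⟩
        · simp only [Prod.mk.injEq]
          exact ⟨by trivial, by linear_combination hr⟩
      · rintro ⟨⟨a, b⟩, hab, heq⟩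
        obtain ⟨-, hb⟩ := Finset.mem_product.mp hab
        obtain ⟨r, rfl⟩ := (Finset.mem_filter.mp hb).2
        obtain ⟨rfl, rfl⟩ : a = x ∧ a * a - r * r = y := by
          simpa [Prod.ext_iff] using heq
        exact ⟨r, by ring⟩
    have hinj : Function.Injective (fun p : F × F => (p.1, p.1 * p.1 - p.2)) := by
      rintro ⟨a, b⟩ ⟨c, d⟩ h
      simp only [Prod.mk.injEq] at h
      obtain ⟨rfl, h2'⟩ := h
      simp only [Prod.mk.injEq, true_and]
      linear_combination -h2'
    have hAcard : A.card = Fintype.card F * S.card := by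
      rw [hA, Finset.card_image_of_injective _ hinj, Finset.card_product, Finset.card_univ]
    have hBcard : B.card = Fintype.card F := by
      rw [hBdef, ← Finset.card_univ (α := F)]
      apply Finset.card_nbij (fun p => p.2) (fun p hp => Finset.mem_univ _)
      · rintro ⟨a, b⟩ hab ⟨c, d⟩ hcd h
        simp_all [hBdef]
      · intro y _
        exact ⟨(0, y), by simp [hBdef], rfl⟩
    have hABcard : (A ∩ B).card = S.card := by
      have : A ∩ B = S.image (fun s => ((0 : F), -s)) := by
        ext ⟨x, y⟩
        simp only [hAdef, hBdef, hSdef, Finset.mem_inter, mem_filter, mem_univ, true_and,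
          mem_image, Prod.mk.injEq]
        constructor
        · rintro ⟨hsq, rfl⟩
          exact ⟨-y, by simpa using hsq, rfl, by ring⟩
        · rintro ⟨s, hs, rfl, rfl⟩
          exact ⟨by simpa using hs, rfl⟩
      rw [this, Finset.card_image_of_injective]
      rintro a b h
      simpa using h
    have hkey := Finset.card_union_add_card_inter A B
    rw [hAcard, hBcard, hABcard] at hkey
    have hScard := two_mul_card_squares hq
    have hkeyQ : ((A ∪ B).card : ℚ) + S.card = Fintype.card F * S.card + Fintype.card F := by
      exact_mod_cast congrArg (Nat.cast : ℕ → ℚ) hkey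
    have hSQ : (2 : ℚ) * S.card = Fintype.card F + 1 := by exact_mod_cast hScard
    linear_combination hkeyQ + ((Fintype.card F : ℚ) - 1) / 2 * hSQ
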